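/- Let T ⊆ Γ be a transversal for the cosets of Z in Γ (so that Γ is the disjoint union of the cosets tZ for t ∈ T), and write an arbitrary element x ∈ ℂ[Γ] as x = Σ_{t∈T} Σ_{z∈Z} a_{t,z}·(tz) with a_{t,z} ∈ ℂ. Then tr_χ(x* x) = Σ_{t∈T} |Σ_{z∈Z} a_{t,z}·χ(z)|². In particular, tr_χ(x* x) is a nonnegative real number for every x ∈ ℂ[Γ]. -/

import Mathlib

open scoped ComplexConjugate

/-- The star operation on the complex group algebra `ℂ[Γ]`, determined by
`(a·g)* = conj(a)·g⁻¹`. -/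
noncomputable def groupAlgebraStar {Γ : Type*} [Group Γ] (x : MonoidAlgebra ℂ Γ) :
    MonoidAlgebra ℂ Γ :=
  MonoidAlgebra.ofCoeff
    (Finsupp.mapDomain (fun g => g⁻¹) (Finsupp.mapRange (starRingEnd ℂ) (map_zero _) x.coeff))

/-- The twisted trace `tr_χ : ℂ[Γ] → ℂ` associated to a character `χ : Z → ℂˣ` of a finite
central subgroup `Z ≤ Γ`: it is `ℂ`-linear with `tr_χ(g) = χ(g)` for `g ∈ Z` and
`tr_χ(g) = 0` for `g ∉ Z`; explicitly `tr_χ(x) = Σ_{z ∈ Z} x(z)·χ(z)`. -/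
noncomputable def twistedTrace {Γ : Type*} [Group Γ] (Z : Subgroup Γ) [Fintype Z]
    (χ : Z →* ℂˣ) (x : MonoidAlgebra ℂ Γ) : ℂ :=
  ∑ z : Z, x.coeff ↑z * (χ z : ℂ)

/-- Let `T ⊆ Γ` be a transversal for the cosets of `Z` in `Γ`, and write
`x ∈ ℂ[Γ]` as `x = Σ_{t∈T} Σ_{z∈Z} a_{t,z}·(tz)` (so that `a_{t,z} = x(tz)`).  Then
`tr_χ(x* x) = Σ_{t∈T} |Σ_{z∈Z} a_{t,z}·χ(z)|²`.  In particular `tr_χ(x* x)` is a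
nonnegative real number for every `x ∈ ℂ[Γ]`. -/
lemma groupAlgebraStar_apply {Γ : Type*} [Group Γ] (x : MonoidAlgebra ℂ Γ) (g : Γ) :
    (groupAlgebraStar x).coeff g = conj (x.coeff g⁻¹) := by
  have hinj : Function.Injective (fun g : Γ => g⁻¹) := fun a b h => by
    simpa using congrArg (·⁻¹) h
  calc (groupAlgebraStar x).coeff g
      = Finsupp.mapDomain (fun g : Γ => g⁻¹)
        (Finsupp.mapRange (starRingEnd ℂ) (map_zero _) x.coeff) ((g⁻¹)⁻¹) := by
        rw [inv_inv]; rfl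
    _ = Finsupp.mapRange (starRingEnd ℂ) (map_zero _) x.coeff g⁻¹ :=
        Finsupp.mapDomain_apply hinj _ _
    _ = conj (x.coeff g⁻¹) := Finsupp.mapRange_apply

lemma conj_chi {Γ : Type*} [Group Γ] (Z : Subgroup Γ) [Fintype Z] (χ : Z →* ℂˣ) (z : Z) :
    conj (χ z : ℂ) = ((χ z : ℂ))⁻¹ := by
  have hn : (z : Z) ^ Fintype.card Z = 1 := pow_card_eq_one
  have h1 : ((χ z : ℂ)) ^ Fintype.card Z = 1 := by
    rw [← Units.val_pow_eq_pow_val, ← map_pow, hn, map_one, Units.val_one]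
  have hns : Complex.normSq (χ z) ^ Fintype.card Z = 1 := by
    rw [← map_pow, h1, map_one]
  have hcard : Fintype.card Z ≠ 0 := Fintype.card_ne_zero
  have h0 : (0:ℝ) ≤ Complex.normSq (χ z) := Complex.normSq_nonneg _
  have hsq : Complex.normSq (χ z) = 1 := by
    rcases lt_trichotomy (Complex.normSq (χ z)) 1 with h1' | h1' | h1'
    · exact absurd hns (by have := pow_lt_one₀ h0 h1' hcard; linarith)
    · exact h1'
    · exact absurd hns (by have := one_lt_pow₀ h1' hcard; linarith)
  have hz0 : (χ z : ℂ) ≠ 0 := Units.ne_zero _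
  field_simp
  rw [mul_comm, Complex.mul_conj, hsq, Complex.ofReal_one]

lemma chi_inv_coe {Γ : Type*} [Group Γ] (Z : Subgroup Γ) [Fintype Z] (χ : Z →* ℂˣ) (z : Z) :
    ((χ z⁻¹ : ℂˣ) : ℂ) = ((χ z : ℂ))⁻¹ := by
  rw [map_inv]; simp

lemma key {Γ : Type*} [Group Γ] (Z : Subgroup Γ) [Fintype Z] (χ : Z →* ℂˣ)
    (T : Set Γ) (hT : Subgroup.IsComplement T (Z : Set Γ)) (x : MonoidAlgebra ℂ Γ) :
    twistedTrace Z χ (groupAlgebraStar x * x) =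
      ((∑ᶠ t : T, Complex.normSq (∑ z : Z, x.coeff ((t : Γ) * (z : Γ)) * (χ z : ℂ))) : ℝ) := by
  classical
  set S : Γ → ℂ := fun t => ∑ z : Z, x.coeff (t * (z : Γ)) * (χ z : ℂ) with hS
  set F : Finset ↥T := x.coeff.support.image (fun g => (hT.equiv g).1) with hF
  set m : ↥T × Z → Γ := fun p => (p.1 : Γ) * (p.2 : Γ) with hm
  -- equiv facts
  have hfst : ∀ (t : ↥T) (z : Z), (hT.equiv ((t : Γ) * (z : Γ))).1 = t := by
    intro t z
    have h1 := hT.equiv_mul_right_of_mem (g := (t : Γ)) (k := (z : Γ)) z.2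
    have h2 := hT.equiv_fst_eq_self_of_mem_of_one_mem (one_mem Z) t.2
    rw [h1]
    exact h2.trans (Subtype.ext rfl)
  -- RHS is a finite sum over F
  have hRHS : (∑ᶠ t : T, Complex.normSq (S (t : Γ))) = ∑ t ∈ F, Complex.normSq (S (t : Γ)) := by
    apply finsum_eq_sum_of_support_subset
    intro t ht
    simp only [Function.mem_support] at ht
    have hne : S (t : Γ) ≠ 0 := fun h => ht (by rw [h]; simp)
    have hex : ∃ z : Z, x.coeff ((t : Γ) * (z : Γ)) ≠ 0 := by
      by_contra hc
      push_neg at hc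
      exact hne (by simp [hS, hc])
    obtain ⟨z, hz⟩ := hex
    have hmem : (t : Γ) * (z : Γ) ∈ x.coeff.support := Finsupp.mem_support_iff.2 hz
    simp only [hF, Finset.coe_image]
    exact ⟨(t : Γ) * (z : Γ), hmem, hfst t z⟩
  -- injectivity of (t, z) ↦ t * z
  have hinjon : ∀ p q : ↥T × Z, m p = m q → p = q := by
    intro p q h
    have h1 := hfst p.1 p.2
    have h2 := hfst q.1 q.2
    rw [show ((p.1 : Γ) * (p.2 : Γ)) = ((q.1 : Γ) * (q.2 : Γ)) from h] at h1
    have hfst' : p.1 = q.1 := h1.symm.trans h2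
    have hsnd : (p.2 : Γ) = (q.2 : Γ) := by
      have h3 := congrArg (fun u : Γ => ((q.1 : Γ))⁻¹ * u) h
      simp only [hm] at h3
      rw [hfst'] at h3
      rw [← mul_assoc, ← mul_assoc, inv_mul_cancel, one_mul, one_mul] at h3
      exact h3
    exact Prod.ext hfst' (Subtype.ext hsnd)
  -- convolution formula
  have hmul : ∀ u : Γ, (groupAlgebraStar x * x).coeff u =
      ∑ a ∈ x.coeff.support, conj (x.coeff (a * u⁻¹)) * x.coeff a := by
    intro u
    rw [MonoidAlgebra.coeff_mul_apply_right, Finsupp.sum]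
    refine Finset.sum_congr rfl fun a _ => ?_
    rw [groupAlgebraStar_apply, mul_inv_rev, inv_inv]
  -- term function
  set f : Γ → ℂ := fun a => ∑ z : Z, conj (x.coeff (a * ((z : Γ))⁻¹)) * x.coeff a * (χ z : ℂ) with hf
  have hLHS1 : twistedTrace Z χ (groupAlgebraStar x * x) = ∑ a ∈ x.coeff.support, f a := by
    rw [twistedTrace]
    calc ∑ z : Z, (groupAlgebraStar x * x).coeff ↑z * (χ z : ℂ)
        = ∑ z : Z, ∑ a ∈ x.coeff.support, conj (x.coeff (a * ((z : Γ))⁻¹)) * x.coeff a * (χ z : ℂ) := by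
          refine Finset.sum_congr rfl fun z _ => ?_
          rw [hmul, Finset.sum_mul]
      _ = ∑ a ∈ x.coeff.support, f a := Finset.sum_comm
  -- reindex over F ×ˢ univ
  have hsub : x.coeff.support ⊆ (F ×ˢ (Finset.univ : Finset Z)).image m := by
    intro a ha
    refine Finset.mem_image.2 ⟨((hT.equiv a).1, (hT.equiv a).2), ?_, ?_⟩
    · exact Finset.mem_product.2 ⟨Finset.mem_image.2 ⟨a, ha, rfl⟩, Finset.mem_univ _⟩
    · exact hT.equiv_fst_mul_equiv_snd a
  have hLHS2 : ∑ a ∈ x.coeff.support, f a = ∑ p ∈ F ×ˢ (Finset.univ : Finset Z), f (m p) := by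
    rw [← Finset.sum_image (f := f) (fun p _ q _ h => hinjon p q h)]
    refine Finset.sum_subset hsub fun a _ hna => ?_
    have : x.coeff a = 0 := Finsupp.notMem_support_iff.mp hna
    simp [hf, this]
  -- per-coset factorization
  have hcoset : ∀ t : ↥T, (∑ w : Z, f ((t : Γ) * (w : Γ))) = conj (S (t : Γ)) * S (t : Γ) := by
    intro t
    have step1 : ∀ w : Z, f ((t : Γ) * (w : Γ)) =
        ∑ z : Z, conj (x.coeff ((t : Γ) * (z : Γ)) * (χ z : ℂ)) * (x.coeff ((t : Γ) * (w : Γ)) * (χ w : ℂ)) := by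
      intro w
      rw [hf]
      refine (Fintype.sum_equiv ((Equiv.inv Z).trans (Equiv.mulRight w)) _ _ fun z => ?_).symm
      have harg : ((t : Γ) * (w : Γ)) * ((((z⁻¹ * w : Z) : Γ))⁻¹) = (t : Γ) * (z : Γ) := by
        push_cast
        group
      have hchi : ((χ (z⁻¹ * w) : ℂˣ) : ℂ) = conj (χ z : ℂ) * (χ w : ℂ) := by
        rw [map_mul, Units.val_mul, chi_inv_coe, conj_chi]
      simp only [Equiv.trans_apply, Equiv.inv_apply, Equiv.coe_mulRight]
      rw [harg, hchi, map_mul]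
      ring
    calc (∑ w : Z, f ((t : Γ) * (w : Γ)))
        = ∑ w : Z, ∑ z : Z,
            conj (x.coeff ((t : Γ) * (z : Γ)) * (χ z : ℂ)) * (x.coeff ((t : Γ) * (w : Γ)) * (χ w : ℂ)) :=
          Finset.sum_congr rfl fun w _ => step1 w
      _ = (∑ z : Z, conj (x.coeff ((t : Γ) * (z : Γ)) * (χ z : ℂ))) *
            (∑ w : Z, x.coeff ((t : Γ) * (w : Γ)) * (χ w : ℂ)) := by
          rw [Finset.sum_comm]
          exact (Finset.sum_mul_sum _ _ _ _).symm
      _ = conj (S (t : Γ)) * S (t : Γ) := by rw [hS, map_sum]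
  -- assemble
  rw [hLHS1, hLHS2, Finset.sum_product, hRHS]
  push_cast
  refine Finset.sum_congr rfl fun t _ => ?_
  rw [Complex.normSq_eq_conj_mul_self]
  exact hcoset t

theorem twistedTrace_star_self {Γ : Type*} [Group Γ] (Z : Subgroup Γ)
    (hZ : Z ≤ Subgroup.center Γ) [Fintype Z] (χ : Z →* ℂˣ)
    (T : Set Γ) (hT : Subgroup.IsComplement T (Z : Set Γ)) (x : MonoidAlgebra ℂ Γ) :
    twistedTrace Z χ (groupAlgebraStar x * x) =
      ((∑ᶠ t : T, Complex.normSq (∑ z : Z, x.coeff ((t : Γ) * (z : Γ)) * (χ z : ℂ))) : ℝ) ∧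
    ∀ y : MonoidAlgebra ℂ Γ, ∃ r : ℝ, 0 ≤ r ∧
      twistedTrace Z χ (groupAlgebraStar y * y) = (r : ℂ) := by
  refine ⟨key Z χ T hT x, fun y => ⟨_, finsum_nonneg fun t => Complex.normSq_nonneg _, key Z χ T hT y⟩⟩
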